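/- With θ = ω·t, the matrix exponential of the CWH dynamics matrix is given in closed form by exp(t·A) = M(θ), where M(θ) is the 6×6 matrix with rows: row 1 = (4 − 3cosθ, 0, 0, sinθ/ω, 2(1 − cosθ)/ω, 0); row 2 = (6(sinθ − θ), 1, 0, 2(cosθ − 1)/ω, (4sinθ − 3θ)/ω, 0); row 3 = (0, 0, cosθ, 0, 0, sinθ/ω); row 4 = (3ω·sinθ, 0, 0, cosθ, 2sinθ, 0); row 5 = (6ω(cosθ − 1), 0, 0, −2sinθ, 4cosθ − 3, 0); row 6 = (0, 0, −ω·sinθ, 0, 0, cosθ). This holds for all t ∈ ℝ. -/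

import Mathlib

noncomputable section

/-- Euclidean norm of a finite real vector. -/
def enorm' {m : ℕ} (v : Fin m → ℝ) : ℝ := Real.sqrt (∑ i, v i ^ 2)

/-- The CWH dynamics matrix. -/
def cwhA (ω : ℝ) : Matrix (Fin 6) (Fin 6) ℝ :=
  !![0, 0, 0, 1, 0, 0;
     0, 0, 0, 0, 1, 0;
     0, 0, 0, 0, 0, 1;
     3*ω^2, 0, 0, 0, 2*ω, 0;
     0, 0, 0, -2*ω, 0, 0;
     0, 0, -ω^2, 0, 0, 0]

/-- The CWH input matrix `B = [0; I₃]`. -/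
def cwhB : Matrix (Fin 6) (Fin 3) ℝ :=
  !![0, 0, 0;
     0, 0, 0;
     0, 0, 0;
     1, 0, 0;
     0, 1, 0;
     0, 0, 1]

/-- State transition matrix `exp(t A)`. -/
def expm (ω t : ℝ) : Matrix (Fin 6) (Fin 6) ℝ := NormedSpace.exp (t • cwhA ω)

/-- Horizontal concatenation of two `6 × 3` blocks into a `6 × 6` matrix. -/
def blockCat (M N : Matrix (Fin 6) (Fin 3) ℝ) : Matrix (Fin 6) (Fin 6) ℝ :=
  Matrix.of fun i j => if h : (j : ℕ) < 3 then M i ⟨j, h⟩ else N i ⟨(j : ℕ) - 3, by omega⟩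

/-- The aggregated impulse matrix `Φ_v(T) = [exp(T A) B  B]`. -/
def Phiv (ω T : ℝ) : Matrix (Fin 6) (Fin 6) ℝ := blockCat (expm ω T * cwhB) cwhB

/-- The two-impulse Gramian `G(T) = Φ_v(T) Φ_v(T)ᵀ`. -/
def gram (ω T : ℝ) : Matrix (Fin 6) (Fin 6) ℝ := Phiv ω T * (Phiv ω T).transpose

/-- First three components of a 6-vector. -/
def first3 (v : Fin 6 → ℝ) : Fin 3 → ℝ := fun i => v ⟨(i : ℕ), by omega⟩

/-- Last three components of a 6-vector. -/
def last3 (v : Fin 6 → ℝ) : Fin 3 → ℝ := fun i => v ⟨(i : ℕ) + 3, by omega⟩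

/-- The stacked two-impulse steering solution. -/
def dVsteer (ω T : ℝ) (x₀ xf : Fin 6 → ℝ) : Fin 6 → ℝ :=
  (Phiv ω T)⁻¹.mulVec (xf - (expm ω T).mulVec x₀)

/-- The fixed-duration two-impulse steering cost `J_T(x₀, x_f)`. -/
def Jfix (ω T : ℝ) (x₀ xf : Fin 6 → ℝ) : ℝ :=
  enorm' (first3 (dVsteer ω T x₀ xf)) + enorm' (last3 (dVsteer ω T x₀ xf))

/-- Euclidean operator norm of a `6 × 6` real matrix. -/
def opNorm (M : Matrix (Fin 6) (Fin 6) ℝ) : ℝ :=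
  ‖(Matrix.toEuclideanCLM (𝕜 := ℝ) M : EuclideanSpace ℝ (Fin 6) →L[ℝ] EuclideanSpace ℝ (Fin 6))‖

/-- The closed-form CWH state transition matrix `M(θ)`, `θ = ω t`. -/
def cwhSTM (ω θ : ℝ) : Matrix (Fin 6) (Fin 6) ℝ :=
  !![4 - 3 * Real.cos θ, 0, 0, Real.sin θ / ω, 2 * (1 - Real.cos θ) / ω, 0;
     6 * (Real.sin θ - θ), 1, 0, 2 * (Real.cos θ - 1) / ω, (4 * Real.sin θ - 3 * θ) / ω, 0;
     0, 0, Real.cos θ, 0, 0, Real.sin θ / ω;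
     3 * ω * Real.sin θ, 0, 0, Real.cos θ, 2 * Real.sin θ, 0;
     6 * ω * (Real.cos θ - 1), 0, 0, -2 * Real.sin θ, 4 * Real.cos θ - 3, 0;
     0, 0, -(ω * Real.sin θ), 0, 0, Real.cos θ]




section CWHProof

open NormedSpace

attribute [local instance] Matrix.linftyOpSemiNormedRing Matrix.linftyOpNormedRing
  Matrix.linftyOpNormedAlgebra

private lemma cons_val_five {α : Type*} {m : ℕ} (x : α) (u : Fin (m+5) → α) :
    Matrix.vecCons x u 5 =
      Matrix.vecHead (Matrix.vecTail (Matrix.vecTail (Matrix.vecTail (Matrix.vecTail u)))) := rfl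

private def cwhA2 (ω : ℝ) : Matrix (Fin 6) (Fin 6) ℝ :=
  !![3*ω^2, 0, 0, 0, 2*ω, 0;
     0, 0, 0, -2*ω, 0, 0;
     0, 0, -ω^2, 0, 0, 0;
     0, 0, 0, -ω^2, 0, 0;
     -6*ω^3, 0, 0, 0, -4*ω^2, 0;
     0, 0, 0, 0, 0, -ω^2]

private def cwhA3 (ω : ℝ) : Matrix (Fin 6) (Fin 6) ℝ :=
  !![0, 0, 0, -ω^2, 0, 0;
     -6*ω^3, 0, 0, 0, -4*ω^2, 0;
     0, 0, 0, 0, 0, -ω^2;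
     -3*ω^4, 0, 0, 0, -2*ω^3, 0;
     0, 0, 0, 2*ω^3, 0, 0;
     0, 0, ω^4, 0, 0, 0]

set_option maxHeartbeats 1000000 in
private lemma cwhA_sq (ω : ℝ) : cwhA ω ^ 2 = cwhA2 ω := by
  rw [sq]
  ext i j
  fin_cases i <;> fin_cases j <;>
    simp [cwhA, cwhA2, Matrix.mul_apply, Fin.sum_univ_succ, cons_val_five,
      Matrix.vecHead, Matrix.vecTail] <;> ring

set_option maxHeartbeats 1000000 in
private lemma cwhA_cube (ω : ℝ) : cwhA ω ^ 3 = cwhA3 ω := by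
  rw [pow_succ, cwhA_sq]
  ext i j
  fin_cases i <;> fin_cases j <;>
    simp [cwhA, cwhA2, cwhA3, Matrix.mul_apply, Fin.sum_univ_succ, cons_val_five,
      Matrix.vecHead, Matrix.vecTail] <;> ring

set_option maxHeartbeats 1000000 in
private lemma cwhA_pow4 (ω : ℝ) : cwhA ω ^ 4 = (-(ω^2)) • cwhA ω ^ 2 := by
  rw [pow_succ, cwhA_cube, cwhA_sq]
  ext i j
  fin_cases i <;> fin_cases j <;>
    simp [cwhA, cwhA2, cwhA3, Matrix.mul_apply, Fin.sum_univ_succ, cons_val_five,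
      Matrix.vecHead, Matrix.vecTail] <;> ring

private def cwhP (ω t : ℝ) : Matrix (Fin 6) (Fin 6) ℝ :=
  1 + t • cwhA ω + ((1 - Real.cos (ω*t))/ω^2) • cwhA ω ^ 2
    + ((ω*t - Real.sin (ω*t))/ω^3) • cwhA ω ^ 3

set_option maxHeartbeats 1000000 in
private lemma stm_eq (ω : ℝ) (hω : ω ≠ 0) (t : ℝ) : cwhSTM ω (ω*t) = cwhP ω t := by
  rw [cwhP, cwhA_sq, cwhA_cube]
  ext i j
  fin_cases i <;> fin_cases j <;>
    simp [cwhSTM, cwhA, cwhA2, cwhA3, Matrix.one_apply, cons_val_five,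
      Matrix.vecHead, Matrix.vecTail] <;>
    field_simp <;> ring

private lemma cwhP_zero (ω : ℝ) : cwhP ω 0 = 1 := by
  simp [cwhP]

private lemma hasDerivAt_cwhP (ω : ℝ) (hω : ω ≠ 0) (t : ℝ) :
    HasDerivAt (cwhP ω) (cwhA ω * cwhP ω t) t := by
  have hlin : HasDerivAt (fun s : ℝ => ω * s) ω t := by
    simpa using (hasDerivAt_id t).const_mul ω
  have hcos : HasDerivAt (fun s : ℝ => Real.cos (ω*s)) (-Real.sin (ω*t) * ω) t :=
    (Real.hasDerivAt_cos (ω*t)).comp t hlin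
  have hsin : HasDerivAt (fun s : ℝ => Real.sin (ω*s)) (Real.cos (ω*t) * ω) t :=
    (Real.hasDerivAt_sin (ω*t)).comp t hlin
  have h1 : HasDerivAt (fun _ : ℝ => (1 : Matrix (Fin 6) (Fin 6) ℝ)) 0 t :=
    hasDerivAt_const _ _
  have h2 : HasDerivAt (fun s : ℝ => s • cwhA ω) ((1:ℝ) • cwhA ω) t :=
    (hasDerivAt_id t).smul_const _
  have h3 : HasDerivAt (fun s : ℝ => ((1 - Real.cos (ω*s))/ω^2) • cwhA ω ^ 2)
      (((0 - -Real.sin (ω*t) * ω)/ω^2) • cwhA ω ^ 2) t :=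
    (((hasDerivAt_const t (1:ℝ)).sub hcos).div_const _).smul_const _
  have h4 : HasDerivAt (fun s : ℝ => ((ω*s - Real.sin (ω*s))/ω^3) • cwhA ω ^ 3)
      (((ω - Real.cos (ω*t) * ω)/ω^3) • cwhA ω ^ 3) t :=
    ((hlin.sub hsin).div_const _).smul_const _
  have h := ((h1.add h2).add h3).add h4
  convert h using 1
  · rfl
  · rfl
  · rfl
  · rfl
  have e2 : cwhA ω * cwhA ω = cwhA ω ^ 2 := (sq _).symm
  have e3 : cwhA ω * cwhA ω ^ 2 = cwhA ω ^ 3 := (pow_succ' _ _).symm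
  have e4 : cwhA ω * cwhA ω ^ 3 = cwhA ω ^ 4 := (pow_succ' _ _).symm
  rw [cwhP, mul_add, mul_add, mul_add, mul_one, mul_smul_comm, mul_smul_comm, mul_smul_comm,
    e2, e3, e4, cwhA_pow4, smul_smul]
  match_scalars <;> field_simp <;> ring

private lemma exp_eq_cwhP (ω : ℝ) (hω : ω ≠ 0) (t : ℝ) :
    exp (t • cwhA ω) = cwhP ω t := by
  set A := cwhA ω with hA
  have key : ∀ s : ℝ, HasDerivAt (fun u : ℝ => exp (u • (-A)) * cwhP ω u) 0 s := by
    intro s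
    have h1 : HasDerivAt (fun u : ℝ => exp (u • (-A))) (exp (s • (-A)) * (-A)) s :=
      hasDerivAt_exp_smul_const (-A) s
    have h2 := hasDerivAt_cwhP ω hω s
    have h := h1.mul h2
    convert h using 1
    · rfl
    · rfl
    · rfl
    · rfl
    simp [mul_assoc, neg_mul, mul_neg, ← hA]
  have hconst : exp (t • (-A)) * cwhP ω t
      = exp ((0:ℝ) • (-A)) * cwhP ω 0 :=
    is_const_of_deriv_eq_zero (fun u => (key u).differentiableAt)
      (fun u => (key u).deriv) t 0
  rw [zero_smul, exp_zero, one_mul, cwhP_zero] at hconst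
  have hcomm : Commute (t • A) (t • (-A)) :=
    (((Commute.refl A).neg_right).smul_left t).smul_right t
  have hmul : exp (t • A) * exp (t • (-A)) = 1 := by
    erw [← exp_add_of_commute hcomm]
    simp
  calc exp (t • A) = exp (t • A) * 1 := (mul_one _).symm
    _ = exp (t • A) * (exp (t • (-A)) * cwhP ω t) := by rw [hconst]
    _ = (exp (t • A) * exp (t • (-A))) * cwhP ω t := by rw [mul_assoc]
    _ = cwhP ω t := by rw [hmul, one_mul]

end CWHProof

/-- **Closed form of the CWH matrix exponential**: `exp(t A) = M(ω t)` for all `t ∈ ℝ`. -/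
theorem cwh_exp_closed_form (ω : ℝ) (hω : 0 < ω) :
    ∀ t : ℝ, expm ω t = cwhSTM ω (ω * t) := by
  intro t
  have hω' : ω ≠ 0 := ne_of_gt hω
  rw [stm_eq ω hω' t]
  exact exp_eq_cwhP ω hω' t

end
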